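/- (Fractional rotation does not increase incoming regret weight from outside the cycle.) Let T be a finite type set, f a full-support probability distribution on T, O a finite outcome set, v a valuation, and M = (x, p) a mechanism. Let C = {t^(1), …, t^(l)} ⊆ T be distinct types, let k satisfy f(t^(k)) = min_{j∈[l]} f(t^(j)), and let M' = (x', p') be the fractional rotation of M along C: x'(t^(j)) = ((f(t^(j)) − f(t^(k)))·x(t^(j)) + f(t^(k))·x(t^(j+1)))/f(t^(j)), p'(t^(j)) = ((f(t^(j)) − f(t^(k)))·p(t^(j)) + f(t^(k))·p(t^(j+1)))/f(t^(j)) (indices modulo l), with M' = M outside C. Then for every t ∈ T∖C: ∑_{j=1}^l f(t^(j))·f(t)·[u(t, M'(t^(j))) − u(t, M'(t))]₊ ≤ ∑_{j=1}^l f(t^(j))·f(t)·[u(t, M(t^(j))) − u(t, M(t))]₊, where [z]₊ = max(z, 0). -/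

import Mathlib

open Finset

/-- Fractional rotation does not increase incoming regret weight from
outside the cycle: for every type `t` outside the cycle, the total weight of the
edges in the type graph from `t` into the cycle does not increase under fractional
rotation. -/
theorem fractional_rotation_incoming_weight
    {T O : Type} [Fintype T] [Fintype O]
    (f : T → ℝ) (hf : ∀ t, 0 < f t) (hf1 : ∑ t, f t = 1)
    (v : T → O → ℝ)
    (x : T → O → ℝ) (p : T → ℝ)
    (l : ℕ) [NeZero l] (c : ZMod l → T) (hc : Function.Injective c)
    (k : ZMod l) (hk : ∀ j, f (c k) ≤ f (c j))
    (x' : T → O → ℝ) (p' : T → ℝ)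
    -- fractional rotation along the cycle ...
    (hx'c : ∀ (j : ZMod l) (o : O),
      x' (c j) o = ((f (c j) - f (c k)) * x (c j) o + f (c k) * x (c (j + 1)) o) / f (c j))
    (hp'c : ∀ j : ZMod l,
      p' (c j) = ((f (c j) - f (c k)) * p (c j) + f (c k) * p (c (j + 1))) / f (c j))
    -- ... and unchanged elsewhere
    (hx'o : ∀ t, (∀ j, c j ≠ t) → x' t = x t)
    (hp'o : ∀ t, (∀ j, c j ≠ t) → p' t = p t) :
    ∀ t, (∀ j, c j ≠ t) →
      ∑ j : ZMod l, f (c j) * f t *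
          max (((∑ o, x' (c j) o * v t o) - p' (c j)) - ((∑ o, x' t o * v t o) - p' t)) 0
        ≤ ∑ j : ZMod l, f (c j) * f t *
            max (((∑ o, x (c j) o * v t o) - p (c j)) - ((∑ o, x t o * v t o) - p t)) 0 := by

  intro t ht
  have hxt := hx'o t ht
  have hpt := hp'o t ht
  have hck : (0:ℝ) < f (c k) := hf _
  have hft : (0:ℝ) ≤ f t := (hf t).le
  set A : ZMod l → ℝ := fun j =>
    ((∑ o, x (c j) o * v t o) - p (c j)) - ((∑ o, x t o * v t o) - p t) with hA
  set m : ZMod l → ℝ := fun j => max (A j) 0 with hm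
  have key : ∀ j : ZMod l,
      f (c j) * f t * max (((∑ o, x' (c j) o * v t o) - p' (c j))
        - ((∑ o, x' t o * v t o) - p' t)) 0
      ≤ f t * ((f (c j) - f (c k)) * m j + f (c k) * m (j + 1)) := by
    intro j
    have hcj : (0:ℝ) < f (c j) := hf _
    have hsum : (∑ o, x' (c j) o * v t o)
        = ((f (c j) - f (c k)) * (∑ o, x (c j) o * v t o)
            + f (c k) * (∑ o, x (c (j+1)) o * v t o)) / f (c j) := by
      rw [Finset.mul_sum, Finset.mul_sum, ← Finset.sum_add_distrib, Finset.sum_div]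
      refine Finset.sum_congr rfl fun o _ => ?_
      rw [hx'c j o]; ring
    have hdiff : ((∑ o, x' (c j) o * v t o) - p' (c j))
          - ((∑ o, x' t o * v t o) - p' t)
        = ((f (c j) - f (c k)) * A j + f (c k) * A (j+1)) / f (c j) := by
      rw [hsum, hp'c j, hxt, hpt, hA]
      field_simp
      ring
    rw [hdiff]
    have h1 : (f (c j) - f (c k)) * A j ≤ (f (c j) - f (c k)) * m j :=
      mul_le_mul_of_nonneg_left (le_max_left _ _) (by linarith [hk j])
    have h2 : f (c k) * A (j+1) ≤ f (c k) * m (j+1) :=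
      mul_le_mul_of_nonneg_left (le_max_left _ _) hck.le
    have hmj : (0:ℝ) ≤ m j := le_max_right _ _
    have hmj1 : (0:ℝ) ≤ m (j+1) := le_max_right _ _
    have hmax : max (((f (c j) - f (c k)) * A j + f (c k) * A (j+1)) / f (c j)) 0
        ≤ ((f (c j) - f (c k)) * m j + f (c k) * m (j+1)) / f (c j) := by
      apply max_le
      · exact (div_le_div_iff_of_pos_right hcj).mpr (by linarith)
      · apply div_nonneg _ hcj.le
        have := hk j
        nlinarith
    calc f (c j) * f t * max (((f (c j) - f (c k)) * A j + f (c k) * A (j+1)) / f (c j)) 0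
        ≤ f (c j) * f t * (((f (c j) - f (c k)) * m j + f (c k) * m (j+1)) / f (c j)) :=
          mul_le_mul_of_nonneg_left hmax (by positivity)
      _ = f t * ((f (c j) - f (c k)) * m j + f (c k) * m (j+1)) := by
          field_simp
  have hshift : ∑ j : ZMod l, f t * f (c k) * m (j + 1)
      = ∑ j : ZMod l, f t * f (c k) * m j :=
    Fintype.sum_equiv (Equiv.addRight (1 : ZMod l))
      (fun j => f t * f (c k) * m (j + 1)) (fun j => f t * f (c k) * m j)
      (fun j => rfl)
  calc ∑ j : ZMod l, f (c j) * f t *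
          max (((∑ o, x' (c j) o * v t o) - p' (c j)) - ((∑ o, x' t o * v t o) - p' t)) 0
      ≤ ∑ j : ZMod l, f t * ((f (c j) - f (c k)) * m j + f (c k) * m (j + 1)) :=
        Finset.sum_le_sum fun j _ => key j
    _ = (∑ j : ZMod l, f t * (f (c j) - f (c k)) * m j)
          + ∑ j : ZMod l, f t * f (c k) * m (j + 1) := by
        rw [← Finset.sum_add_distrib]
        exact Finset.sum_congr rfl fun j _ => by ring
    _ = (∑ j : ZMod l, f t * (f (c j) - f (c k)) * m j)
          + ∑ j : ZMod l, f t * f (c k) * m j := by rw [hshift]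
    _ = ∑ j : ZMod l, f (c j) * f t * m j := by
        rw [← Finset.sum_add_distrib]
        exact Finset.sum_congr rfl fun j _ => by ring
    _ = ∑ j : ZMod l, f (c j) * f t *
          max (((∑ o, x (c j) o * v t o) - p (c j)) - ((∑ o, x t o * v t o) - p t)) 0 := rfl
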